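/- arXiv:2303.14658 — 5 statements merged into one kernel-verified Lean document; each statement's English description precedes it below -/
import Mathlib

section
/- Let b₋ < 0 < b₊ and let ψ₋ : [0, −b₋) → ℝ and ψ₊ : [0, b₊) → ℝ be functions such that for every λ ∈ [0, −b₋), log ∫ exp(−λ·(ℓ(w,z) − ∫ ℓ d(P_W ⊗ μ))) d(P_W ⊗ μ)(w,z) ≤ ψ₋(λ), and for every λ ∈ [0, b₊), log ∫ exp(λ·(ℓ(w,z) − ∫ ℓ d(P_W ⊗ μ))) d(P_W ⊗ μ)(w,z) ≤ ψ₊(λ). Then gen ≤ (1/n) ∑_{i=1}^n inf_{λ ∈ (0, −b₋)} (I(W;Z_i) + ψ₋(λ))/λ, and −gen ≤ (1/n) ∑_{i=1}^n inf_{λ ∈ (0, b₊)} (I(W;Z_i) + ψ₊(λ))/λ. -/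
open MeasureTheory Real

/-- Real-valued Kullback–Leibler divergence `D(P‖Q)`,
the integral of the log-likelihood ratio with respect to `P`. -/
noncomputable def klReal {α : Type*} [MeasurableSpace α] (P Q : Measure α) : ℝ :=
  ∫ x, llr P Q x ∂P


section auxDV
variable {α : Type*} [MeasurableSpace α] {μ ν : Measure α} {f : α → ℝ}

lemma klReal_nonneg_aux [IsProbabilityMeasure μ] [IsProbabilityMeasure ν]
    (hμν : μ ≪ ν) (h_int : Integrable (llr μ ν) μ) : 0 ≤ klReal μ ν := by
  have hgi : Integrable (fun x => Real.exp (-llr μ ν x)) μ := by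
    rw [integrable_congr (exp_neg_llr hμν)]
    exact Measure.integrable_toReal_rnDeriv
  have hJ : Real.exp (∫ x, -llr μ ν x ∂μ) ≤ ∫ x, Real.exp (-llr μ ν x) ∂μ :=
    convexOn_exp.map_integral_le continuous_exp.continuousOn isClosed_univ
      (Filter.Eventually.of_forall fun x => Set.mem_univ _) h_int.neg hgi
  have h1 : ∫ x, Real.exp (-llr μ ν x) ∂μ ≤ 1 := by
    rw [integral_congr_ae (exp_neg_llr hμν), Measure.integral_toReal_rnDeriv']
    simp only [measureReal_def, measure_univ, ENNReal.toReal_one]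
    have : 0 ≤ ((ν.singularPart μ) Set.univ).toReal := ENNReal.toReal_nonneg
    linarith
  have h2 := hJ.trans h1
  rw [integral_neg] at h2
  have h3 : -∫ x, llr μ ν x ∂μ ≤ 0 := by
    nlinarith [Real.add_one_le_exp (-∫ x, llr μ ν x ∂μ)]
  unfold klReal
  linarith

lemma donsker_varadhan_aux [IsProbabilityMeasure μ] [IsProbabilityMeasure ν]
    (hμν : μ ≪ ν) (hfμ : Integrable f μ) (hfν : Integrable (fun x => Real.exp (f x)) ν)
    (hllr : Integrable (llr μ ν) μ) :
    ∫ x, f x ∂μ ≤ klReal μ ν + Real.log (∫ x, Real.exp (f x) ∂ν) := by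
  haveI : IsProbabilityMeasure (ν.tilted f) := isProbabilityMeasure_tilted hfν
  have hac2 : μ ≪ ν.tilted f := hμν.trans (absolutelyContinuous_tilted hfν)
  have hint2 : Integrable (llr μ (ν.tilted f)) μ :=
    integrable_llr_tilted_right hμν hfμ hllr hfν
  have h0 : 0 ≤ klReal μ (ν.tilted f) := klReal_nonneg_aux hac2 hint2
  unfold klReal at h0 ⊢
  rw [integral_llr_tilted_right hμν hfμ hfν hllr] at h0
  linarith

end auxDV

variable {W Z : Type*} [MeasurableSpace W] [MeasurableSpace Z]

/-- Population risk `L(w) = ∫ ℓ(w,z) dμ(z)`. -/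
noncomputable def popRisk (μ : Measure Z) (ℓ : W × Z → ℝ) (w : W) : ℝ :=
  ∫ z, ℓ (w, z) ∂μ

/-- Empirical risk `L̂(w,s) = (1/n) ∑ i, ℓ(w, s i)`. -/
noncomputable def empRisk (n : ℕ) (ℓ : W × Z → ℝ) (w : W) (s : Fin n → Z) : ℝ :=
  (1 / (n : ℝ)) * ∑ i, ℓ (w, s i)

/-- Expected generalization error `gen = E_P[L(W) − L̂(W,S_n)]`. -/
noncomputable def genErr (μ : Measure Z) (n : ℕ) (P : Measure (W × (Fin n → Z)))
    (ℓ : W × Z → ℝ) : ℝ :=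
  ∫ p, (popRisk μ ℓ p.1 - empRisk n ℓ p.1 p.2) ∂P

/-- Expected empirical excess risk `R̂ = E_P[L̂(W,S_n) − L̂(w*,S_n)]`. -/
noncomputable def empExcess (n : ℕ) (P : Measure (W × (Fin n → Z)))
    (ℓ : W × Z → ℝ) (wstar : W) : ℝ :=
  ∫ p, (empRisk n ℓ p.1 p.2 - empRisk n ℓ wstar p.2) ∂P

/-- Expected excess risk `R = ∫ r d(P_W ⊗ μ)` where `r(w,z) = ℓ(w,z) − ℓ(w*,z)`. -/
noncomputable def excessRisk (μ : Measure Z) {n : ℕ} (P : Measure (W × (Fin n → Z)))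
    (ℓ : W × Z → ℝ) (wstar : W) : ℝ :=
  ∫ p, (ℓ p - ℓ (wstar, p.2)) ∂((P.map Prod.fst).prod μ)

/-- Joint law `P_i` of `(W, Z_i)`: the pushforward of `P` under `(w,z) ↦ (w, z_i)`. -/
noncomputable def jointLaw {n : ℕ} (P : Measure (W × (Fin n → Z))) (i : Fin n) :
    Measure (W × Z) :=
  P.map fun p => (p.1, p.2 i)

/-- Mutual information `I(W;Z_i) = D(P_i ‖ P_W ⊗ μ)`. -/
noncomputable def mutInfo (μ : Measure Z) {n : ℕ} (P : Measure (W × (Fin n → Z)))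
    (i : Fin n) : ℝ :=
  klReal (jointLaw P i) ((P.map Prod.fst).prod μ)

theorem individual_MI_bound_CGF
    (μ : Measure Z) [IsProbabilityMeasure μ] (n : ℕ) (hn : 0 < n)
    (P : Measure (W × (Fin n → Z))) [IsProbabilityMeasure P]
    (hmarg : P.map Prod.snd = Measure.pi fun _ : Fin n => μ)
    (ℓ : W × Z → ℝ) (hℓ : Measurable ℓ) (wstar : W)
    (hint : Integrable ℓ ((P.map Prod.fst).prod μ))
    (hinti : ∀ i : Fin n, Integrable ℓ (jointLaw P i))
    (hintw : Integrable (fun z => ℓ (wstar, z)) μ)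
    (hac : ∀ i : Fin n, jointLaw P i ≪ (P.map Prod.fst).prod μ)
    (hIfin : ∀ i : Fin n, Integrable (llr (jointLaw P i) ((P.map Prod.fst).prod μ))
      (jointLaw P i))
    (bm bp : ℝ) (hbm : bm < 0) (hbp : 0 < bp)
    (ψm ψp : ℝ → ℝ)
    (hψmInt : ∀ lam ∈ Set.Ico (0 : ℝ) (-bm),
      Integrable
        (fun p => Real.exp (-lam * (ℓ p - ∫ q, ℓ q ∂((P.map Prod.fst).prod μ))))
        ((P.map Prod.fst).prod μ))
    (hψm : ∀ lam ∈ Set.Ico (0 : ℝ) (-bm),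
      Real.log (∫ p, Real.exp (-lam * (ℓ p - ∫ q, ℓ q ∂((P.map Prod.fst).prod μ)))
          ∂((P.map Prod.fst).prod μ)) ≤ ψm lam)
    (hψpInt : ∀ lam ∈ Set.Ico (0 : ℝ) bp,
      Integrable
        (fun p => Real.exp (lam * (ℓ p - ∫ q, ℓ q ∂((P.map Prod.fst).prod μ))))
        ((P.map Prod.fst).prod μ))
    (hψp : ∀ lam ∈ Set.Ico (0 : ℝ) bp,
      Real.log (∫ p, Real.exp (lam * (ℓ p - ∫ q, ℓ q ∂((P.map Prod.fst).prod μ)))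
          ∂((P.map Prod.fst).prod μ)) ≤ ψp lam) :
    genErr μ n P ℓ ≤
      (1 / (n : ℝ)) * ∑ i : Fin n,
        ⨅ lam : Set.Ioo (0 : ℝ) (-bm), (mutInfo μ P i + ψm lam.1) / lam.1 ∧
    -(genErr μ n P ℓ) ≤
      (1 / (n : ℝ)) * ∑ i : Fin n,
        ⨅ lam : Set.Ioo (0 : ℝ) bp, (mutInfo μ P i + ψp lam.1) / lam.1 := by

  classical
  haveI hPW : IsProbabilityMeasure (P.map (Prod.fst : W × (Fin n → Z) → W)) :=
    Measure.isProbabilityMeasure_map measurable_fst.aemeasurable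
  haveI : IsProbabilityMeasure ((P.map (Prod.fst : W × (Fin n → Z) → W)).prod μ) := by
    infer_instance
  set A := ∫ q, ℓ q ∂((P.map (Prod.fst : W × (Fin n → Z) → W)).prod μ) with hA
  have hmapmeas : ∀ i : Fin n, Measurable (fun p : W × (Fin n → Z) => (p.1, p.2 i)) :=
    fun i => measurable_fst.prodMk ((measurable_pi_apply i).comp measurable_snd)
  haveI hPi : ∀ i, IsProbabilityMeasure (jointLaw P i) := fun i =>
    Measure.isProbabilityMeasure_map (hmapmeas i).aemeasurable
  set B : Fin n → ℝ := fun i => ∫ q, ℓ q ∂(jointLaw P i) with hB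
  -- integrability and value of per-coordinate losses
  have hint_i : ∀ i : Fin n, Integrable (fun p : W × (Fin n → Z) => ℓ (p.1, p.2 i)) P := by
    intro i
    have := (integrable_map_measure hℓ.aestronglyMeasurable
      (hmapmeas i).aemeasurable).mp (hinti i)
    exact this
  have hBeq : ∀ i : Fin n, ∫ p, ℓ (p.1, p.2 i) ∂P = B i := by
    intro i
    simp only [hB]
    rw [show jointLaw P i = P.map (fun p : W × (Fin n → Z) => (p.1, p.2 i)) from rfl,
      integral_map (hmapmeas i).aemeasurable]
    exact (integrable_map_measure hℓ.aestronglyMeasurable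
      (hmapmeas i).aemeasurable).mpr (hint_i i) |>.aestronglyMeasurable
  -- empirical risk
  have hempP : Integrable (fun p : W × (Fin n → Z) => empRisk n ℓ p.1 p.2) P := by
    unfold empRisk
    exact (integrable_finset_sum _ fun i _ => hint_i i).const_mul _
  have hempEq : ∫ p, empRisk n ℓ p.1 p.2 ∂P = (1 / (n : ℝ)) * ∑ i : Fin n, B i := by
    unfold empRisk
    rw [integral_const_mul, integral_finset_sum _ fun i _ => hint_i i]
    congr 1
    exact Finset.sum_congr rfl fun i _ => hBeq i
  -- population risk
  have hpop_meas : StronglyMeasurable (popRisk μ ℓ) :=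
    hℓ.stronglyMeasurable.integral_prod_right'
  have hpopint_W : Integrable (popRisk μ ℓ) (P.map Prod.fst) := hint.integral_prod_left
  have hpopP : Integrable (fun p : W × (Fin n → Z) => popRisk μ ℓ p.1) P :=
    (integrable_map_measure hpop_meas.aestronglyMeasurable
      measurable_fst.aemeasurable).mp hpopint_W
  have hpopEq : ∫ p, popRisk μ ℓ p.1 ∂P = A := by
    rw [hA, integral_prod _ hint,
      ← integral_map measurable_fst.aemeasurable hpop_meas.aestronglyMeasurable]
    rfl
  have hn' : (0:ℝ) < n := by exact_mod_cast hn
  -- gen error formula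
  have hgen : genErr μ n P ℓ = (1 / (n : ℝ)) * ∑ i : Fin n, (A - B i) := by
    unfold genErr
    rw [integral_sub hpopP hempP, hpopEq, hempEq, Finset.sum_sub_distrib]
    simp only [Finset.sum_const, Finset.card_fin, nsmul_eq_mul]
    field_simp
  -- per-coordinate Donsker-Varadhan bounds
  have key_m : ∀ i : Fin n, ∀ lam, lam ∈ Set.Ioo (0:ℝ) (-bm) →
      A - B i ≤ (mutInfo μ P i + ψm lam) / lam := by
    intro i lam hlam
    have hlam0 : 0 < lam := hlam.1
    have hIco : lam ∈ Set.Ico (0:ℝ) (-bm) := ⟨hlam0.le, hlam.2⟩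
    have hf : Integrable (fun q : W × Z => -lam * (ℓ q - A)) (jointLaw P i) :=
      ((hinti i).sub (integrable_const A)).const_mul _
    have hdv := donsker_varadhan_aux (hac i) hf (hψmInt lam hIco) (hIfin i)
    have hIe : ∫ q, -lam * (ℓ q - A) ∂(jointLaw P i) = lam * (A - B i) := by
      rw [integral_const_mul, integral_sub (hinti i) (integrable_const A)]
      simp only [integral_const, measure_univ, probReal_univ, ENNReal.toReal_one, smul_eq_mul, one_mul]
      try simp only [hB]
      try ring
    rw [hIe] at hdv
    have hψ := hψm lam hIco
    rw [le_div_iff₀ hlam0]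
    have : klReal (jointLaw P i) ((P.map Prod.fst).prod μ) = mutInfo μ P i := rfl
    nlinarith [hdv, hψ]
  have key_p : ∀ i : Fin n, ∀ lam, lam ∈ Set.Ioo (0:ℝ) bp →
      B i - A ≤ (mutInfo μ P i + ψp lam) / lam := by
    intro i lam hlam
    have hlam0 : 0 < lam := hlam.1
    have hIco : lam ∈ Set.Ico (0:ℝ) bp := ⟨hlam0.le, hlam.2⟩
    have hf : Integrable (fun q : W × Z => lam * (ℓ q - A)) (jointLaw P i) :=
      ((hinti i).sub (integrable_const A)).const_mul _
    have hdv := donsker_varadhan_aux (hac i) hf (hψpInt lam hIco) (hIfin i)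
    have hIe : ∫ q, lam * (ℓ q - A) ∂(jointLaw P i) = lam * (B i - A) := by
      rw [integral_const_mul, integral_sub (hinti i) (integrable_const A)]
      simp only [integral_const, measure_univ, probReal_univ, ENNReal.toReal_one, smul_eq_mul, one_mul]
      try simp only [hB]
      try ring
    rw [hIe] at hdv
    have hψ := hψp lam hIco
    rw [le_div_iff₀ hlam0]
    have : klReal (jointLaw P i) ((P.map Prod.fst).prod μ) = mutInfo μ P i := rfl
    nlinarith [hdv, hψ]
  haveI hne_m : Nonempty (Set.Ioo (0:ℝ) (-bm)) :=
    ⟨⟨-bm/2, by constructor <;> linarith⟩⟩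
  haveI hne_p : Nonempty (Set.Ioo (0:ℝ) bp) :=
    ⟨⟨bp/2, by constructor <;> linarith⟩⟩
  constructor
  · rw [hgen]
    refine mul_le_mul_of_nonneg_left (Finset.sum_le_sum fun i _ => ?_) (by positivity)
    exact le_ciInf fun lam => key_m i lam.1 lam.2
  · rw [hgen, ← mul_neg, ← Finset.sum_neg_distrib]
    simp only [neg_sub]
    refine mul_le_mul_of_nonneg_left (Finset.sum_le_sum fun i _ => ?_) (by positivity)
    exact le_ciInf fun lam => key_p i lam.1 lam.2
end

section
/- Suppose the excess loss r is σ-sub-Gaussian under P_W ⊗ μ, i.e. log ∫ exp(λ·(r − ∫ r d(P_W ⊗ μ))) d(P_W ⊗ μ) ≤ λ²σ²/2 for every λ ∈ ℝ. Then the expected generalization error satisfies gen ≤ (1/n) ∑_{i=1}^n √(2σ²·I(W;Z_i)), and the expected excess risk satisfies R ≤ R̂ + (1/n) ∑_{i=1}^n √(2σ²·I(W;Z_i)). -/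
open MeasureTheory Real

variable {W Z : Type*} [MeasurableSpace W] [MeasurableSpace Z]

lemma aux_pi_map_eval {ι : Type*} [Fintype ι] [DecidableEq ι] {Z : Type*} [MeasurableSpace Z]
    (μ : Measure Z) [IsProbabilityMeasure μ] (i : ι) :
    (Measure.pi fun _ : ι => μ).map (fun s => s i) = μ := by
  ext A hA
  rw [Measure.map_apply (measurable_pi_apply i) hA]
  have : (fun s : ι → Z => s i) ⁻¹' A
      = Set.pi Set.univ (Function.update (fun _ => Set.univ) i A) := Set.eval_preimage
  rw [this, Measure.pi_pi]
  rw [Finset.prod_eq_single i (fun j _ hj => by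
    rw [Function.update_of_ne hj]; exact measure_univ) (by simp)]
  rw [Function.update_self]

lemma aux_klReal_nonneg {α : Type*} [MeasurableSpace α] (P Q : Measure α)
    [IsProbabilityMeasure P] [IsProbabilityMeasure Q]
    (hPQ : P ≪ Q) (hint : Integrable (llr P Q) P) : 0 ≤ ∫ x, llr P Q x ∂P := by
  have h1 : Integrable (fun x => exp (-(llr P Q x))) P :=
    (Measure.integrable_toReal_rnDeriv).congr (exp_neg_llr hPQ).symm
  have hjensen : exp (∫ x, -(llr P Q x) ∂P) ≤ ∫ x, exp (-(llr P Q x)) ∂P := by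
    refine convexOn_exp.map_integral_le continuous_exp.continuousOn isClosed_univ
      (Filter.Eventually.of_forall fun x => Set.mem_univ _) hint.neg ?_
    exact h1
  have h2 : ∫ x, exp (-(llr P Q x)) ∂P ≤ 1 := by
    rw [integral_congr_ae (exp_neg_llr hPQ)]
    rw [Measure.integral_toReal_rnDeriv']
    have : ((Q.singularPart P) Set.univ).toReal ≥ 0 := ENNReal.toReal_nonneg
    simp only [measureReal_def, measure_univ, ENNReal.toReal_one]
    linarith
  have := hjensen.trans h2
  rw [Real.exp_le_one_iff, integral_neg] at this
  linarith

lemma aux_donsker {α : Type*} [MeasurableSpace α] (P Q : Measure α)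
    [IsProbabilityMeasure P] [IsProbabilityMeasure Q]
    (hPQ : P ≪ Q) (hllr : Integrable (llr P Q) P) (f : α → ℝ)
    (hfP : Integrable f P) (hfQ : Integrable (fun x => exp (f x)) Q) :
    ∫ x, f x ∂P ≤ (∫ x, llr P Q x ∂P) + Real.log (∫ x, exp (f x) ∂Q) := by
  haveI : IsProbabilityMeasure (Q.tilted f) := isProbabilityMeasure_tilted hfQ
  have hPt : P ≪ Q.tilted f := hPQ.trans (absolutelyContinuous_tilted hfQ)
  have hi : Integrable (llr P (Q.tilted f)) P :=
    integrable_llr_tilted_right hPQ hfP hllr hfQ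
  have h0 : 0 ≤ ∫ x, llr P (Q.tilted f) x ∂P := aux_klReal_nonneg P _ hPt hi
  rw [integral_llr_tilted_right hPQ hfP hfQ hllr] at h0
  linarith

lemma aux_opt (σ I b : ℝ) (h : ∀ lam : ℝ, lam * b ≤ I + lam ^ 2 * σ ^ 2 / 2) :
    b ≤ Real.sqrt (2 * σ ^ 2 * I) := by
  have hI : 0 ≤ I := by have := h 0; simpa using this
  rcases eq_or_ne σ 0 with hσ | hσ
  · subst hσ
    have hb : b ≤ 0 := by
      by_contra hb
      push_neg at hb
      have := h ((I + 1) / b)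
      rw [div_mul_cancel₀ _ hb.ne'] at this
      nlinarith [this]
    calc b ≤ 0 := hb
      _ ≤ Real.sqrt (2 * 0 ^ 2 * I) := Real.sqrt_nonneg _
  · have hσ2 : (0:ℝ) < σ ^ 2 := by positivity
    have h3 := h (b / σ ^ 2)
    have e1 : b / σ ^ 2 * b = b ^ 2 / σ ^ 2 := by ring
    have e2 : (b / σ ^ 2) ^ 2 * σ ^ 2 / 2 = b ^ 2 / σ ^ 2 / 2 := by
      field_simp
    rw [e1, e2] at h3
    have h4 : b ^ 2 / σ ^ 2 ≤ 2 * I := by linarith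
    have h5 : b ^ 2 ≤ 2 * σ ^ 2 * I := by
      rw [div_le_iff₀ hσ2] at h4; linarith [h4]
    calc b ≤ |b| := le_abs_self b
      _ = Real.sqrt (b ^ 2) := (Real.sqrt_sq_eq_abs b).symm
      _ ≤ Real.sqrt (2 * σ ^ 2 * I) := Real.sqrt_le_sqrt h5

theorem subGaussian_excess_loss_bound
    (μ : Measure Z) [IsProbabilityMeasure μ] (n : ℕ) (hn : 0 < n)
    (P : Measure (W × (Fin n → Z))) [IsProbabilityMeasure P]
    (hmarg : P.map Prod.snd = Measure.pi fun _ : Fin n => μ)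
    (ℓ : W × Z → ℝ) (hℓ : Measurable ℓ) (wstar : W)
    (hint : Integrable ℓ ((P.map Prod.fst).prod μ))
    (hinti : ∀ i : Fin n, Integrable ℓ (jointLaw P i))
    (hintw : Integrable (fun z => ℓ (wstar, z)) μ)
    (hac : ∀ i : Fin n, jointLaw P i ≪ (P.map Prod.fst).prod μ)
    (hIfin : ∀ i : Fin n, Integrable (llr (jointLaw P i) ((P.map Prod.fst).prod μ))
      (jointLaw P i))
    (σ : ℝ)
    (hsubInt : ∀ lam : ℝ,
      Integrable
        (fun p => Real.exp (lam * ((ℓ p - ℓ (wstar, p.2)) - excessRisk μ P ℓ wstar)))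
        ((P.map Prod.fst).prod μ))
    (hsub : ∀ lam : ℝ,
      Real.log (∫ p, Real.exp (lam * ((ℓ p - ℓ (wstar, p.2)) - excessRisk μ P ℓ wstar))
          ∂((P.map Prod.fst).prod μ)) ≤ lam ^ 2 * σ ^ 2 / 2) :
    genErr μ n P ℓ ≤
      (1 / (n : ℝ)) * ∑ i : Fin n, Real.sqrt (2 * σ ^ 2 * mutInfo μ P i) ∧
    excessRisk μ P ℓ wstar ≤
      empExcess n P ℓ wstar +
        (1 / (n : ℝ)) * ∑ i : Fin n, Real.sqrt (2 * σ ^ 2 * mutInfo μ P i) := by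
  
  classical
  haveI : IsProbabilityMeasure (P.map (Prod.fst : W × (Fin n → Z) → W)) :=
    Measure.isProbabilityMeasure_map measurable_fst.aemeasurable
  set R := excessRisk μ P ℓ wstar with hR
  have hφ : ∀ i : Fin n, Measurable (fun p : W × (Fin n → Z) => (p.1, p.2 i)) :=
    fun i => measurable_fst.prodMk ((measurable_pi_apply i).comp measurable_snd)
  haveI hjp : ∀ i : Fin n, IsProbabilityMeasure (jointLaw P i) :=
    fun i => Measure.isProbabilityMeasure_map (hφ i).aemeasurable
  have hℓw : Measurable (fun z => ℓ (wstar, z)) :=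
    hℓ.comp (measurable_const.prodMk measurable_id)
  -- marginal facts
  have hsnd : ∀ i : Fin n, P.map (fun p : W × (Fin n → Z) => p.2 i) = μ := by
    intro i
    have h1 : P.map (fun p : W × (Fin n → Z) => p.2 i)
        = (P.map Prod.snd).map (fun s => s i) :=
      (Measure.map_map (measurable_pi_apply i) measurable_snd).symm
    rw [h1, hmarg, aux_pi_map_eval]
  have hji_snd : ∀ i : Fin n, (jointLaw P i).map Prod.snd = μ := by
    intro i
    have h1 : (jointLaw P i).map Prod.snd
        = P.map (fun p : W × (Fin n → Z) => p.2 i) := by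
      rw [jointLaw, Measure.map_map measurable_snd (hφ i)]
      rfl
    rw [h1, hsnd i]
  have hQsnd : ((P.map Prod.fst).prod μ).map Prod.snd = μ := by
    rw [Measure.map_snd_prod, measure_univ, one_smul]
  -- integrability and integrals of the wstar loss under various measures
  set C := ∫ z, ℓ (wstar, z) ∂μ with hC
  have hwgen : ∀ (α : Type _) (_ : MeasurableSpace α) (ρ : Measure α) (ψ : α → Z)
      (hψ : Measurable ψ) (hρ : ρ.map ψ = μ),
      Integrable (fun a => ℓ (wstar, ψ a)) ρ ∧ ∫ a, ℓ (wstar, ψ a) ∂ρ = C := by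
    intro α mα ρ ψ hψ hρ
    letI := mα
    have hi : Integrable (fun z => ℓ (wstar, z)) (ρ.map ψ) := by rw [hρ]; exact hintw
    constructor
    · exact (integrable_map_measure hℓw.aestronglyMeasurable hψ.aemeasurable).mp hi
    · have := integral_map (μ := ρ) hψ.aemeasurable
        (f := fun z => ℓ (wstar, z)) hℓw.aestronglyMeasurable
      rw [hρ] at this
      exact this.symm
  have hQw := hwgen _ _ ((P.map Prod.fst).prod μ) Prod.snd measurable_snd hQsnd
  have hjw : ∀ i : Fin n,
      Integrable (fun q : W × Z => ℓ (wstar, q.2)) (jointLaw P i) ∧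
      ∫ q : W × Z, ℓ (wstar, q.2) ∂(jointLaw P i) = C :=
    fun i => hwgen _ _ (jointLaw P i) Prod.snd measurable_snd (hji_snd i)
  have hPw : ∀ i : Fin n,
      Integrable (fun p : W × (Fin n → Z) => ℓ (wstar, p.2 i)) P ∧
      ∫ p : W × (Fin n → Z), ℓ (wstar, p.2 i) ∂P = C :=
    fun i => hwgen _ _ P (fun p => p.2 i)
      ((measurable_pi_apply i).comp measurable_snd) (hsnd i)
  -- loss under joint laws, pulled back to P
  set Ei := fun i : Fin n => ∫ q : W × Z, ℓ q ∂(jointLaw P i) with hEi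
  have hℓi_int : ∀ i : Fin n, Integrable (fun p : W × (Fin n → Z) => ℓ (p.1, p.2 i)) P :=
    fun i => (integrable_map_measure hℓ.aestronglyMeasurable (hφ i).aemeasurable).mp (hinti i)
  have hℓi_eq : ∀ i : Fin n, ∫ p : W × (Fin n → Z), ℓ (p.1, p.2 i) ∂P = Ei i :=
    fun i => (integral_map (hφ i).aemeasurable hℓ.aestronglyMeasurable).symm
  -- population risk
  set L0 := ∫ q : W × Z, ℓ q ∂((P.map Prod.fst).prod μ) with hL0
  have hgint : Integrable (fun w => ∫ z, ℓ (w, z) ∂μ) (P.map Prod.fst) :=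
    hint.integral_prod_left
  have hpop_int : Integrable (fun p : W × (Fin n → Z) => popRisk μ ℓ p.1) P :=
    (integrable_map_measure hgint.1 measurable_fst.aemeasurable).mp hgint
  have hpop_eq : ∫ p : W × (Fin n → Z), popRisk μ ℓ p.1 ∂P = L0 := by
    have h1 : ∫ p : W × (Fin n → Z), popRisk μ ℓ p.1 ∂P
        = ∫ w, (fun w => ∫ z, ℓ (w, z) ∂μ) w ∂(P.map Prod.fst) :=
      (integral_map measurable_fst.aemeasurable hgint.1).symm
    rw [h1, hL0, integral_prod ℓ hint]
  -- empirical risks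
  have hemp_int : Integrable (fun p : W × (Fin n → Z) => empRisk n ℓ p.1 p.2) P := by
    simp only [empRisk]
    exact (integrable_finset_sum _ (fun i _ => hℓi_int i)).const_mul _
  have hemp_eq : ∫ p : W × (Fin n → Z), empRisk n ℓ p.1 p.2 ∂P
      = (1 / (n : ℝ)) * ∑ i, Ei i := by
    simp only [empRisk]
    rw [integral_const_mul, integral_finset_sum _ (fun i _ => hℓi_int i)]
    congr 1
    exact Finset.sum_congr rfl fun i _ => hℓi_eq i
  have hempw_int : Integrable (fun p : W × (Fin n → Z) => empRisk n ℓ wstar p.2) P := by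
    simp only [empRisk]
    exact (integrable_finset_sum _ (fun i _ => (hPw i).1)).const_mul _
  have hempw_eq : ∫ p : W × (Fin n → Z), empRisk n ℓ wstar p.2 ∂P = C := by
    simp only [empRisk]
    rw [integral_const_mul, integral_finset_sum _ (fun i _ => (hPw i).1)]
    rw [Finset.sum_congr rfl fun i _ => (hPw i).2, Finset.sum_const, Finset.card_univ,
      Fintype.card_fin, nsmul_eq_mul]
    field_simp
  -- main identities
  have F1 : genErr μ n P ℓ = L0 - (1 / (n : ℝ)) * ∑ i, Ei i := by
    rw [genErr, integral_sub hpop_int hemp_int, hpop_eq, hemp_eq]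
  have F2 : empExcess n P ℓ wstar = (1 / (n : ℝ)) * ∑ i, Ei i - C := by
    rw [empExcess, integral_sub hemp_int hempw_int, hemp_eq, hempw_eq]
  have F3 : R = L0 - C := by
    rw [hR, excessRisk, integral_sub hint hQw.1, hQw.2]
  have F4 : ∀ i : Fin n, ∫ q : W × Z, (ℓ q - ℓ (wstar, q.2)) ∂(jointLaw P i) = Ei i - C :=
    fun i => by rw [integral_sub (hinti i) (hjw i).1, (hjw i).2]
  -- core per-coordinate bound
  have F5 : ∀ i : Fin n, L0 - Ei i ≤ Real.sqrt (2 * σ ^ 2 * mutInfo μ P i) := by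
    intro i
    have hr_int : Integrable (fun q : W × Z => ℓ q - ℓ (wstar, q.2)) (jointLaw P i) :=
      (hinti i).sub (hjw i).1
    have hDV : ∀ lam : ℝ,
        lam * ((Ei i - C) - R) ≤ mutInfo μ P i + lam ^ 2 * σ ^ 2 / 2 := by
      intro lam
      have hfP : Integrable (fun q : W × Z => lam * ((ℓ q - ℓ (wstar, q.2)) - R))
          (jointLaw P i) := (hr_int.sub (integrable_const R)).const_mul lam
      have hd := aux_donsker (jointLaw P i) ((P.map Prod.fst).prod μ) (hac i) (hIfin i)
        (fun q => lam * ((ℓ q - ℓ (wstar, q.2)) - R)) hfP (hsubInt lam)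
      have hint' : ∫ q : W × Z, lam * ((ℓ q - ℓ (wstar, q.2)) - R) ∂(jointLaw P i)
          = lam * ((Ei i - C) - R) := by
        rw [integral_const_mul, integral_sub hr_int (integrable_const R), integral_const,
          F4 i]
        simp
      rw [hint'] at hd
      refine hd.trans ?_
      have hlog := hsub lam
      have hkl : (∫ x, llr (jointLaw P i) ((P.map Prod.fst).prod μ) x ∂(jointLaw P i))
          = mutInfo μ P i := rfl
      rw [hkl]
      linarith
    have hopt := aux_opt σ (mutInfo μ P i) (R - (Ei i - C)) (fun lam => by
      have := hDV (-lam)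
      nlinarith [this])
    have : R - (Ei i - C) = L0 - Ei i := by rw [F3]; ring
    rwa [this] at hopt
  -- assemble
  have hn' : (0:ℝ) < (n : ℝ) := by exact_mod_cast hn
  have hgen_le : genErr μ n P ℓ ≤
      (1 / (n : ℝ)) * ∑ i : Fin n, Real.sqrt (2 * σ ^ 2 * mutInfo μ P i) := by
    rw [F1]
    have hsum_eq : L0 - (1 / (n : ℝ)) * ∑ i, Ei i
        = (1 / (n : ℝ)) * ∑ i : Fin n, (L0 - Ei i) := by
      rw [Finset.sum_sub_distrib, Finset.sum_const, Finset.card_univ, Fintype.card_fin,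
        nsmul_eq_mul]
      field_simp
    rw [hsum_eq]
    refine mul_le_mul_of_nonneg_left ?_ (by positivity)
    exact Finset.sum_le_sum fun i _ => F5 i
  refine ⟨hgen_le, ?_⟩
  rw [F1] at hgen_le
  rw [F2, F3]
  linarith
end

section
/- Suppose the excess loss r satisfies the (η,c)-central condition under P_W ⊗ μ for some η > 0 and 0 < c ≤ 1, i.e. 0 < R and log ∫ exp(−η·r) d(P_W ⊗ μ) ≤ −c·η·R. Then gen ≤ ((1 − c)/c)·R̂ + (1/(c·η·n)) ∑_{i=1}^n I(W;Z_i), and moreover R ≤ (1/c)·R̂ + (1/(c·η·n)) ∑_{i=1}^n I(W;Z_i). -/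
open MeasureTheory Real

lemma klReal_nonneg' {α : Type*} [MeasurableSpace α] (P Q : Measure α)
    [IsProbabilityMeasure P] [IsProbabilityMeasure Q] (hPQ : P ≪ Q)
    (hllr : Integrable (llr P Q) P) : 0 ≤ klReal P Q := by
  have ht : Integrable (fun x => (Q.rnDeriv P x).toReal) P :=
    Measure.integrable_toReal_rnDeriv
  have hae : (fun x => - llr P Q x) =ᵐ[P] fun x => Real.log ((Q.rnDeriv P x).toReal) := by
    filter_upwards [exp_neg_llr hPQ] with x hx
    rw [← hx, Real.log_exp]
  have hle : ∀ᵐ x ∂P, - llr P Q x ≤ (Q.rnDeriv P x).toReal - 1 := by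
    filter_upwards [hae, exp_neg_llr hPQ] with x hx hx'
    rw [hx]
    have hpos : 0 < (Q.rnDeriv P x).toReal := by
      rw [← hx']; exact Real.exp_pos _
    linarith [Real.log_le_sub_one_of_pos hpos]
  have hInt : ∫ x, - llr P Q x ∂P ≤ ∫ x, ((Q.rnDeriv P x).toReal - 1) ∂P :=
    integral_mono_ae hllr.neg (ht.sub (integrable_const 1)) hle
  have h1 : ∫ x, ((Q.rnDeriv P x).toReal - 1) ∂P
      = (∫ x, (Q.rnDeriv P x).toReal ∂P) - 1 := by
    rw [integral_sub ht (integrable_const 1)]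
    simp
  have h2 : ∫ x, (Q.rnDeriv P x).toReal ∂P ≤ 1 := by
    have := Measure.setIntegral_toReal_rnDeriv_le (μ := Q) (ν := P)
      (s := Set.univ) (measure_ne_top Q Set.univ)
    simpa using this
  rw [integral_neg] at hInt
  unfold klReal
  linarith

lemma dv_ineq' {α : Type*} [MeasurableSpace α] (P Q : Measure α)
    [IsProbabilityMeasure P] [IsProbabilityMeasure Q] (hPQ : P ≪ Q) (f : α → ℝ)
    (hfP : Integrable f P) (hllr : Integrable (llr P Q) P)
    (hexp : Integrable (fun x => Real.exp (f x)) Q) :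
    ∫ x, f x ∂P ≤ klReal P Q + Real.log (∫ x, Real.exp (f x) ∂Q) := by
  haveI : IsProbabilityMeasure (Q.tilted f) := isProbabilityMeasure_tilted hexp
  have hPQ' : P ≪ Q.tilted f := hPQ.trans (absolutelyContinuous_tilted hexp)
  have hllr' : Integrable (llr P (Q.tilted f)) P :=
    integrable_llr_tilted_right hPQ hfP hllr hexp
  have h0 : 0 ≤ klReal P (Q.tilted f) := klReal_nonneg' P (Q.tilted f) hPQ' hllr'
  have heq := integral_llr_tilted_right hPQ hfP hexp hllr
  unfold klReal at *
  linarith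

lemma pi_map_eval' {Z : Type*} [MeasurableSpace Z] (μ : Measure Z) [IsProbabilityMeasure μ]
    (n : ℕ) (i : Fin n) :
    (Measure.pi fun _ : Fin n => μ).map (Function.eval i) = μ := by
  ext s hs
  have hpre : Function.eval i ⁻¹' s
      = Set.pi Set.univ (Function.update (fun _ : Fin n => (Set.univ : Set Z)) i s) :=
    Set.eval_preimage
  rw [Measure.map_apply (measurable_pi_apply i) hs, hpre, Measure.pi_pi]
  rw [Finset.prod_eq_single i]
  · simp
  · intro j _ hj
    simp [Function.update_of_ne hj]
  · simp

variable {W Z : Type*} [MeasurableSpace W] [MeasurableSpace Z]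

theorem fast_rate_eta_c_central
    (μ : Measure Z) [IsProbabilityMeasure μ] (n : ℕ) (hn : 0 < n)
    (P : Measure (W × (Fin n → Z))) [IsProbabilityMeasure P]
    (hmarg : P.map Prod.snd = Measure.pi fun _ : Fin n => μ)
    (ℓ : W × Z → ℝ) (hℓ : Measurable ℓ) (wstar : W)
    (hint : Integrable ℓ ((P.map Prod.fst).prod μ))
    (hinti : ∀ i : Fin n, Integrable ℓ (jointLaw P i))
    (hintw : Integrable (fun z => ℓ (wstar, z)) μ)
    (hac : ∀ i : Fin n, jointLaw P i ≪ (P.map Prod.fst).prod μ)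
    (hIfin : ∀ i : Fin n, Integrable (llr (jointLaw P i) ((P.map Prod.fst).prod μ))
      (jointLaw P i))
    (η c : ℝ) (hη : 0 < η) (hc : 0 < c) (hc1 : c ≤ 1)
    (hR : 0 < excessRisk μ P ℓ wstar)
    (hmgfInt : Integrable (fun p => Real.exp (-η * (ℓ p - ℓ (wstar, p.2))))
      ((P.map Prod.fst).prod μ))
    (hcentral :
      Real.log (∫ p, Real.exp (-η * (ℓ p - ℓ (wstar, p.2))) ∂((P.map Prod.fst).prod μ)) ≤
        -c * η * excessRisk μ P ℓ wstar) :
    genErr μ n P ℓ ≤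
      ((1 - c) / c) * empExcess n P ℓ wstar +
        (1 / (c * η * (n : ℝ))) * ∑ i : Fin n, mutInfo μ P i ∧
    excessRisk μ P ℓ wstar ≤
      (1 / c) * empExcess n P ℓ wstar +
        (1 / (c * η * (n : ℝ))) * ∑ i : Fin n, mutInfo μ P i := by
  classical
  haveI hPW : IsProbabilityMeasure (P.map Prod.fst) :=
    Measure.isProbabilityMeasure_map measurable_fst.aemeasurable
  have hnR : (0:ℝ) < n := by exact_mod_cast hn
  have hℓw : Measurable (fun z => ℓ (wstar, z)) := hℓ.comp measurable_prodMk_left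
  have hℓw2 : Measurable (fun p : W × Z => ℓ (wstar, p.2)) := hℓw.comp measurable_snd
  have hmf : ∀ i : Fin n, Measurable (fun p : W × (Fin n → Z) => (p.1, p.2 i)) :=
    fun i => measurable_fst.prodMk ((measurable_pi_apply i).comp measurable_snd)
  have hPiProb : ∀ i : Fin n, IsProbabilityMeasure (jointLaw P i) := fun i => by
    rw [jointLaw]; exact Measure.isProbabilityMeasure_map (hmf i).aemeasurable
  -- marginals
  have hP2 : ∀ i : Fin n, P.map (fun p : W × (Fin n → Z) => p.2 i) = μ := fun i => by
    have he : (fun p : W × (Fin n → Z) => p.2 i) = (Function.eval i) ∘ Prod.snd := rfl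
    rw [he, ← Measure.map_map (measurable_pi_apply i) measurable_snd, hmarg,
      pi_map_eval' μ n i]
  have hsnd_i : ∀ i : Fin n, (jointLaw P i).map Prod.snd = μ := fun i => by
    rw [jointLaw, Measure.map_map measurable_snd (hmf i)]
    exact hP2 i
  have hQ2 : ((P.map Prod.fst).prod μ).map Prod.snd = μ := by
    rw [Measure.map_snd_prod]; simp
  -- integrability transfers
  have hintwQ : Integrable (fun p : W × Z => ℓ (wstar, p.2)) ((P.map Prod.fst).prod μ) :=
    (integrable_map_measure hℓw.aestronglyMeasurable measurable_snd.aemeasurable).mp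
      (by rw [hQ2]; exact hintw)
  have hw_int_i : ∀ i : Fin n, Integrable (fun x : W × Z => ℓ (wstar, x.2)) (jointLaw P i) :=
    fun i =>
    (integrable_map_measure hℓw.aestronglyMeasurable measurable_snd.aemeasurable).mp
      (by rw [hsnd_i i]; exact hintw)
  have hterm : ∀ i : Fin n, Integrable (fun p : W × (Fin n → Z) => ℓ (p.1, p.2 i)) P :=
    fun i =>
    (integrable_map_measure hℓ.aestronglyMeasurable (hmf i).aemeasurable).mp (hinti i)
  have hterm' : ∀ i : Fin n, Integrable (fun p : W × (Fin n → Z) => ℓ (wstar, p.2 i)) P :=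
    fun i =>
    (integrable_map_measure hℓw.aestronglyMeasurable
      ((measurable_pi_apply i).comp measurable_snd).aemeasurable).mp
      (by rw [hP2 i]; exact hintw)
  -- integral identities
  have hB : ∀ i : Fin n, ∫ x, ℓ x ∂(jointLaw P i) = ∫ p, ℓ (p.1, p.2 i) ∂P := fun i => by
    rw [jointLaw, integral_map (hmf i).aemeasurable hℓ.aestronglyMeasurable]
  have hC : ∀ i : Fin n, ∫ x, ℓ (wstar, x.2) ∂(jointLaw P i) = ∫ z, ℓ (wstar, z) ∂μ :=
    fun i => by
    rw [← hsnd_i i, integral_map measurable_snd.aemeasurable hℓw.aestronglyMeasurable]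
  have hm2 : ∀ i : Fin n, Measurable (fun p : W × (Fin n → Z) => p.2 i) :=
    fun i => (measurable_pi_apply i).comp measurable_snd
  have hC' : ∀ i : Fin n, ∫ p, ℓ (wstar, p.2 i) ∂P = ∫ z, ℓ (wstar, z) ∂μ := fun i => by
    have h0 := integral_map (μ := P) (φ := fun p : W × (Fin n → Z) => p.2 i)
      (hm2 i).aemeasurable hℓw.aestronglyMeasurable
    rw [hP2 i] at h0
    exact h0.symm
  have hDQ : ∫ p, ℓ (wstar, p.2) ∂((P.map Prod.fst).prod μ) = ∫ z, ℓ (wstar, z) ∂μ := by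
    have h0 := integral_map (μ := (P.map Prod.fst).prod μ) (φ := Prod.snd)
      measurable_snd.aemeasurable hℓw.aestronglyMeasurable
    rw [hQ2] at h0
    exact h0.symm
  have hRA : excessRisk μ P ℓ wstar
      = (∫ p, ℓ p ∂((P.map Prod.fst).prod μ)) - ∫ z, ℓ (wstar, z) ∂μ := by
    rw [excessRisk, integral_sub hint hintwQ, hDQ]
  -- popRisk
  have hpop_sm : StronglyMeasurable (fun w => ∫ z, ℓ (w, z) ∂μ) :=
    hℓ.stronglyMeasurable.integral_prod_right'
  have hpopP : Integrable (fun p : W × (Fin n → Z) => popRisk μ ℓ p.1) P := by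
    have h1 : Integrable (fun w => ∫ z, ℓ (w, z) ∂μ) (P.map Prod.fst) :=
      hint.integral_prod_left
    exact (integrable_map_measure hpop_sm.aestronglyMeasurable
      measurable_fst.aemeasurable).mp h1
  have hIntPop : ∫ p, popRisk μ ℓ p.1 ∂P = ∫ p, ℓ p ∂((P.map Prod.fst).prod μ) := by
    rw [MeasureTheory.integral_prod _ hint]
    simp only [popRisk]
    exact (integral_map measurable_fst.aemeasurable hpop_sm.aestronglyMeasurable).symm
  -- empirical risks
  have hEmpInt : Integrable (fun p : W × (Fin n → Z) => empRisk n ℓ p.1 p.2) P := by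
    simp only [empRisk]
    exact (integrable_finset_sum Finset.univ (fun i _ => hterm i)).const_mul _
  have hEmpInt' : Integrable (fun p : W × (Fin n → Z) => empRisk n ℓ wstar p.2) P := by
    simp only [empRisk]
    exact (integrable_finset_sum Finset.univ (fun i _ => hterm' i)).const_mul _
  have hIntEmp : ∫ p, empRisk n ℓ p.1 p.2 ∂P
      = (1/(n:ℝ)) * ∑ i, ∫ p, ℓ (p.1, p.2 i) ∂P := by
    simp only [empRisk]
    rw [integral_const_mul, integral_finset_sum _ (fun i _ => hterm i)]
  have hIntEmp' : ∫ p, empRisk n ℓ wstar p.2 ∂P = ∫ z, ℓ (wstar, z) ∂μ := by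
    simp only [empRisk]
    rw [integral_const_mul, integral_finset_sum _ (fun i _ => hterm' i),
      Finset.sum_congr rfl (fun i _ => hC' i), Finset.sum_const]
    simp only [Finset.card_univ, Fintype.card_fin, nsmul_eq_mul]
    field_simp
  have hgen : genErr μ n P ℓ = (∫ p, ℓ p ∂((P.map Prod.fst).prod μ))
      - (1/(n:ℝ)) * ∑ i, ∫ p, ℓ (p.1, p.2 i) ∂P := by
    rw [genErr, integral_sub hpopP hEmpInt, hIntPop, hIntEmp]
  have hRhat : empExcess n P ℓ wstar
      = (1/(n:ℝ)) * (∑ i, ∫ p, ℓ (p.1, p.2 i) ∂P) - ∫ z, ℓ (wstar, z) ∂μ := by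
    rw [empExcess, integral_sub hEmpInt hEmpInt', hIntEmp, hIntEmp']
  -- Donsker–Varadhan per coordinate
  have hDV : ∀ i : Fin n,
      c * excessRisk μ P ℓ wstar - mutInfo μ P i / η
        ≤ (∫ p, ℓ (p.1, p.2 i) ∂P) - ∫ z, ℓ (wstar, z) ∂μ := by
    intro i
    haveI := hPiProb i
    have hfP : Integrable (fun x : W × Z => -η * (ℓ x - ℓ (wstar, x.2))) (jointLaw P i) :=
      ((hinti i).sub (hw_int_i i)).const_mul _
    have h := dv_ineq' (jointLaw P i) ((P.map Prod.fst).prod μ) (hac i)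
      (fun x => -η * (ℓ x - ℓ (wstar, x.2))) hfP (hIfin i) hmgfInt
    have h2 : ∫ x, -η * (ℓ x - ℓ (wstar, x.2)) ∂(jointLaw P i)
        = -η * ((∫ p, ℓ (p.1, p.2 i) ∂P) - ∫ z, ℓ (wstar, z) ∂μ) := by
      rw [integral_const_mul, integral_sub (hinti i) (hw_int_i i), hB i, hC i]
    have hklm : klReal (jointLaw P i) ((P.map Prod.fst).prod μ) = mutInfo μ P i := rfl
    rw [h2, hklm] at h
    have h3 : -η * ((∫ p, ℓ (p.1, p.2 i) ∂P) - ∫ z, ℓ (wstar, z) ∂μ)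
        ≤ mutInfo μ P i + -c * η * excessRisk μ P ℓ wstar := by
      calc _ ≤ mutInfo μ P i + Real.log (∫ p, Real.exp (-η * (ℓ p - ℓ (wstar, p.2)))
            ∂((P.map Prod.fst).prod μ)) := h
        _ ≤ _ := by linarith [hcentral]
    have h6 : (c * η * excessRisk μ P ℓ wstar - mutInfo μ P i) / η
        ≤ (∫ p, ℓ (p.1, p.2 i) ∂P) - ∫ z, ℓ (wstar, z) ∂μ := by
      rw [div_le_iff₀ hη]; nlinarith [h3]
    have h7 : (c * η * excessRisk μ P ℓ wstar - mutInfo μ P i) / η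
        = c * excessRisk μ P ℓ wstar - mutInfo μ P i / η := by
      field_simp
      try ring
    linarith [h6, h7.symm.le, h7.le]
  -- sum it up
  have hsum : (n:ℝ) * (c * excessRisk μ P ℓ wstar) - (∑ i, mutInfo μ P i) / η
      ≤ (∑ i, ∫ p, ℓ (p.1, p.2 i) ∂P) - (n:ℝ) * ∫ z, ℓ (wstar, z) ∂μ := by
    have h := Finset.sum_le_sum (s := Finset.univ) (fun i _ => hDV i)
    simp only [Finset.sum_sub_distrib, Finset.sum_const, Finset.card_univ, Fintype.card_fin,
      nsmul_eq_mul, ← Finset.sum_div] at h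
    linarith [h]
  -- final algebra
  set R := excessRisk μ P ℓ wstar with hRdef
  set Rh := empExcess n P ℓ wstar with hRhdef
  set K := ∑ i, mutInfo μ P i with hKdef
  set SB := ∑ i, ∫ p, ℓ (p.1, p.2 i) ∂P with hSBdef
  set Ls := ∫ z, ℓ (wstar, z) ∂μ with hLsdef
  have hnRh : (n:ℝ) * Rh = SB - (n:ℝ) * Ls := by
    rw [hRhat]; field_simp; try ring
  have hkey : c * R ≤ Rh + K / (η * (n:ℝ)) := by
    have h1 : (n:ℝ) * (c * R) ≤ (n:ℝ) * Rh + K / η := by linarith [hsum, hnRh]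
    have h2 : c * R ≤ ((n:ℝ) * Rh + K / η) / (n:ℝ) := by
      rw [le_div_iff₀ hnR]; linarith [h1]
    have h3 : ((n:ℝ) * Rh + K / η) / (n:ℝ) = Rh + K / (η * (n:ℝ)) := by
      field_simp
    linarith [h2, h3.le, h3.symm.le]
  have hgoal2 : R ≤ (1 / c) * Rh + (1 / (c * η * (n:ℝ))) * K := by
    have h1 : R ≤ (Rh + K / (η * (n:ℝ))) / c := by
      rw [le_div_iff₀ hc]; nlinarith [hkey]
    have h2 : (Rh + K / (η * (n:ℝ))) / c = (1 / c) * Rh + (1 / (c * η * (n:ℝ))) * K := by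
      field_simp
    linarith [h1, h2.le, h2.symm.le]
  have hgenR : genErr μ n P ℓ = R - Rh := by
    rw [hgen, hRA, hRhat]; ring
  refine ⟨?_, hgoal2⟩
  have heq : ((1 - c) / c) * Rh = (1 / c) * Rh - Rh := by field_simp; try ring
  rw [hgenR]
  linarith [hgoal2, heq.le, heq.symm.le]
end

section
/- Suppose the loss ℓ itself satisfies the (η,c)-central condition under P_W ⊗ μ for some η > 0 and 0 < c ≤ 1, i.e. 0 < ∫ ℓ d(P_W ⊗ μ) and log ∫ exp(−η·ℓ) d(P_W ⊗ μ) ≤ −c·η·∫ ℓ d(P_W ⊗ μ). Then gen ≤ ((1 − c)/c)·E_P[L̂(W,S_n)] + (1/(c·η·n)) ∑_{i=1}^n I(W;Z_i). -/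
open MeasureTheory Real

variable {W Z : Type*} [MeasurableSpace W] [MeasurableSpace Z]

lemma dv_le {α : Type*} [MeasurableSpace α] (P Q : Measure α)
    [IsProbabilityMeasure P] [IsProbabilityMeasure Q]
    (hPQ : P ≪ Q) (f : α → ℝ) (hf : Measurable f) (hfP : Integrable f P)
    (hllr : Integrable (llr P Q) P) (hexp : Integrable (fun x => Real.exp (f x)) Q) :
    ∫ x, f x ∂P ≤ klReal P Q + Real.log (∫ x, Real.exp (f x) ∂Q) := by
  set g := fun x => f x - llr P Q x with hg
  have hgmeas : Measurable g := hf.sub (measurable_llr P Q)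
  have hbound : ∀ x, (P.rnDeriv Q x).toReal • Real.exp (g x) ≤ Real.exp (f x) := by
    intro x
    set t := (P.rnDeriv Q x).toReal with ht
    have ht0 : 0 ≤ t := ENNReal.toReal_nonneg
    rcases eq_or_lt_of_le ht0 with h0 | hpos
    · simp [smul_eq_mul, ← h0, (Real.exp_pos (f x)).le]
    · have : g x = f x - Real.log t := rfl
      rw [this, smul_eq_mul, Real.exp_sub, Real.exp_log hpos, mul_div_assoc',
        mul_comm, mul_div_assoc, div_self hpos.ne', mul_one]
  have hnn : ∀ x, 0 ≤ (P.rnDeriv Q x).toReal • Real.exp (g x) := fun x =>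
    mul_nonneg ENNReal.toReal_nonneg (Real.exp_pos _).le
  have hintQ : Integrable (fun x => (P.rnDeriv Q x).toReal • Real.exp (g x)) Q := by
    refine Integrable.mono' hexp ?_ ?_
    · exact ((Measure.measurable_rnDeriv P Q).ennreal_toReal.mul
        (Real.measurable_exp.comp hgmeas)).aestronglyMeasurable
    · filter_upwards with x
      rw [Real.norm_eq_abs, abs_of_nonneg (hnn x)]
      exact hbound x
  have hintP : Integrable (fun x => Real.exp (g x)) P :=
    (integrable_rnDeriv_smul_iff hPQ).mp hintQ
  have hJensen : Real.exp (∫ x, g x ∂P) ≤ ∫ x, Real.exp (g x) ∂P := by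
    have := convexOn_exp.map_integral_le (μ := P) continuous_exp.continuousOn
      isClosed_univ (by simp) (hfP.sub hllr) (by exact hintP)
    simpa using this
  have heq : ∫ x, (P.rnDeriv Q x).toReal • Real.exp (g x) ∂Q = ∫ x, Real.exp (g x) ∂P :=
    integral_rnDeriv_smul hPQ
  have hle : ∫ x, Real.exp (g x) ∂P ≤ ∫ x, Real.exp (f x) ∂Q := by
    rw [← heq]; exact integral_mono hintQ hexp hbound
  have hfinal : Real.exp (∫ x, g x ∂P) ≤ ∫ x, Real.exp (f x) ∂Q := hJensen.trans hle
  have hpos : 0 < ∫ x, Real.exp (f x) ∂Q := lt_of_lt_of_le (Real.exp_pos _) hfinal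
  have h2 := (Real.le_log_iff_exp_le hpos).mpr hfinal
  rw [hg, integral_sub hfP hllr] at h2
  unfold klReal
  linarith

theorem eta_c_central_on_loss_bound
    (μ : Measure Z) [IsProbabilityMeasure μ] (n : ℕ) (hn : 0 < n)
    (P : Measure (W × (Fin n → Z))) [IsProbabilityMeasure P]
    (hmarg : P.map Prod.snd = Measure.pi fun _ : Fin n => μ)
    (ℓ : W × Z → ℝ) (hℓ : Measurable ℓ) (wstar : W)
    (hint : Integrable ℓ ((P.map Prod.fst).prod μ))
    (hinti : ∀ i : Fin n, Integrable ℓ (jointLaw P i))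
    (hintw : Integrable (fun z => ℓ (wstar, z)) μ)
    (hac : ∀ i : Fin n, jointLaw P i ≪ (P.map Prod.fst).prod μ)
    (hIfin : ∀ i : Fin n, Integrable (llr (jointLaw P i) ((P.map Prod.fst).prod μ))
      (jointLaw P i))
    (η c : ℝ) (hη : 0 < η) (hc : 0 < c) (hc1 : c ≤ 1)
    (hL : 0 < ∫ p, ℓ p ∂((P.map Prod.fst).prod μ))
    (hmgfInt : Integrable (fun p => Real.exp (-η * ℓ p)) ((P.map Prod.fst).prod μ))
    (hcentral :
      Real.log (∫ p, Real.exp (-η * ℓ p) ∂((P.map Prod.fst).prod μ)) ≤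
        -c * η * ∫ p, ℓ p ∂((P.map Prod.fst).prod μ)) :
    genErr μ n P ℓ ≤
      ((1 - c) / c) * (∫ p, empRisk n ℓ p.1 p.2 ∂P) +
        (1 / (c * η * (n : ℝ))) * ∑ i : Fin n, mutInfo μ P i := by
  classical
  haveI : IsProbabilityMeasure (P.map (Prod.fst : W × (Fin n → Z) → W)) :=
    Measure.isProbabilityMeasure_map measurable_fst.aemeasurable
  set Q := (P.map Prod.fst).prod μ with hQdef
  haveI : IsProbabilityMeasure Q := by rw [hQdef]; infer_instance
  have hφ : ∀ i : Fin n, Measurable fun p : W × (Fin n → Z) => (p.1, p.2 i) :=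
    fun i => measurable_fst.prodMk ((measurable_pi_apply i).comp measurable_snd)
  haveI hPi : ∀ i, IsProbabilityMeasure (jointLaw P i) := fun i =>
    Measure.isProbabilityMeasure_map (hφ i).aemeasurable
  set L := ∫ p, ℓ p ∂Q with hLdef
  set E : Fin n → ℝ := fun i => ∫ p, ℓ p ∂(jointLaw P i) with hEdef
  set I : Fin n → ℝ := fun i => mutInfo μ P i with hIdef
  have hn' : (0 : ℝ) < n := by exact_mod_cast hn
  -- Donsker–Varadhan per coordinate
  have hkey : ∀ i : Fin n, c * η * L ≤ I i + η * E i := by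
    intro i
    have hdv := dv_le (jointLaw P i) Q (hac i) (fun p => -η * ℓ p)
      (hℓ.const_mul (-η)) ((hinti i).const_mul (-η)) (hIfin i) hmgfInt
    rw [integral_const_mul] at hdv
    have hIeq : I i = klReal (jointLaw P i) Q := rfl
    have hEeq : E i = ∫ a, ℓ a ∂(jointLaw P i) := rfl
    have hlog : Real.log (∫ x, Real.exp (-η * ℓ x) ∂Q) ≤ -c * η * L := hcentral
    nlinarith [hdv, hIeq, hEeq, hlog]
  -- integral of population risk
  have hsmpop : AEStronglyMeasurable (popRisk μ ℓ) (P.map Prod.fst) :=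
    hℓ.stronglyMeasurable.integral_prod_right'.aestronglyMeasurable
  have hintpop1 : Integrable (popRisk μ ℓ) (P.map Prod.fst) := hint.integral_prod_left
  have hintpop : Integrable (fun p : W × (Fin n → Z) => popRisk μ ℓ p.1) P :=
    (integrable_map_measure hsmpop measurable_fst.aemeasurable).mp hintpop1
  have hpop : ∫ p, popRisk μ ℓ p.1 ∂P = L := by
    rw [← integral_map measurable_fst.aemeasurable hsmpop, hLdef]
    exact (integral_prod ℓ hint).symm
  -- integral of empirical risk
  have hintφ : ∀ i : Fin n, Integrable (fun p : W × (Fin n → Z) => ℓ (p.1, p.2 i)) P :=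
    fun i => (integrable_map_measure hℓ.aestronglyMeasurable (hφ i).aemeasurable).mp (hinti i)
  have hEi : ∀ i : Fin n, ∫ p : W × (Fin n → Z), ℓ (p.1, p.2 i) ∂P = E i := fun i =>
    (integral_map (hφ i).aemeasurable hℓ.aestronglyMeasurable).symm
  have hintemp : Integrable (fun p : W × (Fin n → Z) => empRisk n ℓ p.1 p.2) P := by
    have : (fun p : W × (Fin n → Z) => empRisk n ℓ p.1 p.2)
        = fun p => (1 / (n : ℝ)) * ∑ i, ℓ (p.1, p.2 i) := rfl
    rw [this]
    exact (integrable_finset_sum _ fun i _ => hintφ i).const_mul _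
  have hemp : ∫ p, empRisk n ℓ p.1 p.2 ∂P = (1 / (n : ℝ)) * ∑ i, E i := by
    have : (fun p : W × (Fin n → Z) => empRisk n ℓ p.1 p.2)
        = fun p => (1 / (n : ℝ)) * ∑ i, ℓ (p.1, p.2 i) := rfl
    rw [this, integral_const_mul, integral_finset_sum _ fun i _ => hintφ i]
    rw [Finset.sum_congr rfl fun i _ => hEi i]
  -- assemble
  have hgen : genErr μ n P ℓ = L - (1 / (n : ℝ)) * ∑ i, E i := by
    rw [genErr, integral_sub hintpop hintemp, hpop, hemp]
  have hsum : (n : ℝ) * (c * η * L) ≤ (∑ i, I i) + η * ∑ i, E i := by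
    have h := Finset.sum_le_sum fun i (_ : i ∈ Finset.univ) => hkey i
    simpa [Finset.sum_add_distrib, Finset.mul_sum, mul_comm] using h
  rw [hgen, hemp]
  set SE := ∑ i, E i
  have hSI : ∑ i : Fin n, mutInfo μ P i = ∑ i, I i := rfl
  rw [hSI]
  set SI := ∑ i, I i
  have hpos : (0 : ℝ) < c * η * n := by positivity
  have key : c * η * (n : ℝ) * (L - 1 / (n : ℝ) * SE)
      ≤ c * η * (n : ℝ) * ((1 - c) / c * (1 / (n : ℝ) * SE) + 1 / (c * η * (n : ℝ)) * SI) := by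
    have e1 : c * η * (n : ℝ) * (L - 1 / (n : ℝ) * SE) = (n : ℝ) * (c * η * L) - c * η * SE := by
      field_simp
    have e2 : c * η * (n : ℝ) * ((1 - c) / c * (1 / (n : ℝ) * SE) + 1 / (c * η * (n : ℝ)) * SI)
        = (1 - c) * η * SE + SI := by
      field_simp
    rw [e1, e2]
    linarith [hsum]
  exact le_of_mul_le_mul_left key hpos
end

section
/- Let (Ω, Q) be a probability space and let X : Ω → ℝ be square-integrable with 0 < E_Q[X], X ≥ −b Q-almost surely for some b > 0, and suppose the Bernstein condition with exponent β = 1 holds: E_Q[X²] ≤ B·E_Q[X] for some B ≥ 1. Then X satisfies the (η, 1/2)-central condition for every η with 0 < η ≤ min(1/b, 1/(2B(e−2))): log E_Q[exp(−ηX)] ≤ −(1/2)·η·E_Q[X]. -/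
open MeasureTheory Real

lemma exp_sub_eq (u : ℝ) : Real.exp u - 1 - u = ∑' n : ℕ, u ^ (n + 2) / (Nat.factorial (n + 2)) := by
  have h := Real.summable_pow_div_factorial u
  have he : Real.exp u = ∑' n : ℕ, u ^ n / (Nat.factorial n) := by
    rw [Real.exp_eq_exp_ℝ, NormedSpace.exp_eq_tsum_div]
  rw [he, h.tsum_eq_zero_add, ((summable_nat_add_iff 1).2 h).tsum_eq_zero_add]
  simp [Nat.factorial]

lemma exp_le_quad {u : ℝ} (hu : u ≤ 1) :
    Real.exp u ≤ 1 + u + (Real.exp 1 - 2) * u ^ 2 := by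
  rcases le_or_gt u 0 with h | h
  · have h1 : 1 + (-u) + (-u) ^ 2 / 2 ≤ Real.exp (-u) := Real.quadratic_le_exp_of_nonneg (by linarith)
    have h2 : Real.exp (-u) * Real.exp u = 1 := by rw [← Real.exp_add]; simp
    have h3 : (0:ℝ) < Real.exp u := Real.exp_pos u
    have he : (2.5:ℝ) < Real.exp 1 := by
      have := Real.exp_one_gt_d9; linarith
    have hE : (1 - u + u ^ 2 / 2) * Real.exp u ≤ 1 := by
      nlinarith [mul_le_mul_of_nonneg_right h1 h3.le]
    have hd : (0:ℝ) < 1 - u + u ^ 2 / 2 := by nlinarith [sq_nonneg u]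
    have hq : Real.exp u ≤ 1 + u + u ^ 2 / 2 := by
      nlinarith [sq_nonneg (u * u)]
    nlinarith [sq_nonneg u]
  · have hsum := fun (v : ℝ) => Real.summable_pow_div_factorial v
    have hs2 := (summable_nat_add_iff (f := fun n : ℕ => u ^ n / (Nat.factorial n : ℝ)) 2).2 (hsum u)
    have hs1 := (summable_nat_add_iff (f := fun n : ℕ => (1:ℝ) ^ n / (Nat.factorial n : ℝ)) 2).2 (hsum 1)
    have hle : Real.exp u - 1 - u ≤ (Real.exp 1 - 2) * u ^ 2 := by
      rw [exp_sub_eq u]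
      have h12 : Real.exp 1 - 2 = ∑' n : ℕ, (1:ℝ) ^ (n + 2) / (Nat.factorial (n + 2)) := by
        have := exp_sub_eq 1; linarith
      rw [mul_comm, h12, ← tsum_mul_left]
      refine hs2.tsum_le_tsum (fun n => ?_) (hs1.mul_left _)
      have hupow : u ^ (n + 2) ≤ u ^ 2 := by
        calc u ^ (n + 2) = u ^ 2 * u ^ n := by ring
          _ ≤ u ^ 2 * 1 := mul_le_mul_of_nonneg_left (pow_le_one₀ h.le hu) (sq_nonneg u)
          _ = u ^ 2 := by ring
      have hfac : (0:ℝ) < (Nat.factorial (n + 2) : ℝ) := by positivity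
      calc u ^ (n + 2) / (Nat.factorial (n + 2) : ℝ) ≤ u ^ 2 / (Nat.factorial (n + 2) : ℝ) := by
            gcongr
        _ = u ^ 2 * ((1:ℝ) ^ (n + 2) / (Nat.factorial (n + 2))) := by
            rw [one_pow]; ring
    nlinarith

/-- **Bernstein condition implies the `(η, 1/2)`-central condition.**
If `X` is square-integrable, bounded below by `-b` almost surely, has positive mean,
and satisfies the Bernstein condition `E[X²] ≤ B·E[X]` (exponent `β = 1`), then for every
`0 < η ≤ min (1/b) (1/(2B(e−2)))` we have `log E[exp(−ηX)] ≤ −(1/2)·η·E[X]`. -/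
theorem bernstein_implies_central
    {Ω : Type*} [MeasurableSpace Ω] (Q : Measure Ω) [IsProbabilityMeasure Q]
    (X : Ω → ℝ) (hX2 : MemLp X 2 Q)
    (hEX : 0 < ∫ ω, X ω ∂Q)
    (b : ℝ) (hb : 0 < b) (hXb : ∀ᵐ ω ∂Q, -b ≤ X ω)
    (B : ℝ) (hB : 1 ≤ B)
    (hBern : ∫ ω, (X ω) ^ 2 ∂Q ≤ B * ∫ ω, X ω ∂Q) :
    ∀ η : ℝ, 0 < η → η ≤ min (1 / b) (1 / (2 * B * (Real.exp 1 - 2))) →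
      Real.log (∫ ω, Real.exp (-η * X ω) ∂Q) ≤ -(1 / 2) * η * ∫ ω, X ω ∂Q := by
  intro η hη hmin
  obtain ⟨c, hc⟩ : ∃ c : ℝ, c = Real.exp 1 - 2 := ⟨_, rfl⟩
  rw [← hc] at hmin
  have he2 : (0:ℝ) < c := by
    have := Real.exp_one_gt_d9; rw [hc]; linarith
  have hBpos : (0:ℝ) < B := by linarith
  have hdpos : (0:ℝ) < 2 * B * c := by positivity
  have hηb : η * b ≤ 1 := (le_div_iff₀ hb).1 ((le_min_iff.1 hmin).1)
  have hη2' : η * (2 * B * c) ≤ 1 := (le_div_iff₀ hdpos).1 ((le_min_iff.1 hmin).2)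
  have hIX : Integrable X Q := hX2.integrable one_le_two
  have hIX2 : Integrable (fun ω => X ω ^ 2) Q := hX2.integrable_sq
  have e1 : Integrable (fun ω => 1 + -η * X ω) Q := by
    exact (integrable_const 1).add (hIX.const_mul (-η))
  have e2 : Integrable (fun ω => c * η ^ 2 * X ω ^ 2) Q := hIX2.const_mul _
  have hIg : Integrable (fun ω => 1 + -η * X ω + c * η ^ 2 * X ω ^ 2) Q := by
    exact e1.add e2
  have hpt : ∀ᵐ ω ∂Q, Real.exp (-η * X ω) ≤ 1 + -η * X ω + c * η ^ 2 * X ω ^ 2 := by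
    filter_upwards [hXb] with ω hω
    have h1 : -η * X ω ≤ 1 := by nlinarith
    calc Real.exp (-η * X ω) ≤ 1 + (-η * X ω) + (Real.exp 1 - 2) * (-η * X ω) ^ 2 :=
          exp_le_quad h1
      _ = 1 + -η * X ω + c * η ^ 2 * X ω ^ 2 := by rw [hc]; ring
  have hmf : AEStronglyMeasurable (fun ω => Real.exp (-η * X ω)) Q :=
    (Real.measurable_exp.comp_aemeasurable
      (hX2.aestronglyMeasurable.aemeasurable.const_mul (-η))).aestronglyMeasurable
  have hIf : Integrable (fun ω => Real.exp (-η * X ω)) Q := by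
    refine hIg.mono' hmf ?_
    filter_upwards [hpt] with ω hω
    rw [Real.norm_eq_abs, abs_of_nonneg (Real.exp_pos _).le]; exact hω
  have hEg : ∫ ω, (1 + -η * X ω + c * η ^ 2 * X ω ^ 2) ∂Q =
      1 + -η * ∫ ω, X ω ∂Q + c * η ^ 2 * ∫ ω, X ω ^ 2 ∂Q := by
    rw [integral_add e1 e2, integral_add (integrable_const 1) (hIX.const_mul (-η)),
      integral_const_mul, integral_const_mul, integral_const]
    simp
  have h1 : ∫ ω, Real.exp (-η * X ω) ∂Q
      ≤ 1 + -η * ∫ ω, X ω ∂Q + c * η ^ 2 * ∫ ω, X ω ^ 2 ∂Q := by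
    rw [← hEg]; exact integral_mono_ae hIf hIg hpt
  have h2 : c * η ^ 2 * ∫ ω, X ω ^ 2 ∂Q ≤ c * η ^ 2 * (B * ∫ ω, X ω ∂Q) :=
    mul_le_mul_of_nonneg_left hBern (by positivity)
  have h3 : c * η ^ 2 * (B * ∫ ω, X ω ∂Q) ≤ 1 / 2 * η * ∫ ω, X ω ∂Q := by
    have hnn := mul_nonneg (by linarith : (0:ℝ) ≤ 1 - η * (2 * B * c))
      (mul_nonneg hη.le hEX.le)
    nlinarith
  have key : ∫ ω, Real.exp (-η * X ω) ∂Q ≤ 1 + (-(1 / 2) * η * ∫ ω, X ω ∂Q) := by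
    nlinarith
  have hfinal : ∫ ω, Real.exp (-η * X ω) ∂Q ≤ Real.exp (-(1 / 2) * η * ∫ ω, X ω ∂Q) :=
    key.trans (by linarith [Real.add_one_le_exp (-(1 / 2) * η * ∫ ω, X ω ∂Q)])
  have hpos : 0 < ∫ ω, Real.exp (-η * X ω) ∂Q := by
    rw [integral_pos_iff_support_of_nonneg_ae
      (Filter.Eventually.of_forall fun ω => (Real.exp_pos _).le) hIf]
    have hsupp : Function.support (fun ω => Real.exp (-η * X ω)) = Set.univ :=
      Set.eq_univ_of_forall fun ω => (Real.exp_pos _).ne'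
    rw [hsupp]
    simp
  rw [Real.log_le_iff_le_exp hpos]
  exact hfinal
end
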